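/- arXiv:2110.02534 — 2 statements merged into one kernel-verified Lean document; each statement's English description precedes it below -/
import Mathlib

section
/- Let $R$ be a finite-dimensional associative unital algebra over a field $K$ with $\dim_K R=d$. If a subset $H\subseteq R$ is $\omega$-Lie-nilpotent (i.e., $H\subseteq\mathrm{L}_\omega(H)$), then $H$ is Lie-nilpotent of index $d$ (i.e., $H\subseteq\mathrm{L}_d(H)$). -/
/-- `lprod r [x₁, …, xₘ]` is the left-normed commutator `[r, x₁, …, xₘ]_{m+1}`. -/
def lprod {R : Type*} [Ring R] (r : R) (l : List R) : R :=
  l.foldl (fun a x => a * x - x * a) r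

/-- The `k`-th Lie centralizer of a subset `H` of `R`:
`Lcen k H = {r : R | [r, x₁, …, x_k]_{k+1} = 0 for all xᵢ ∈ H}`. -/
def Lcen {R : Type*} [Ring R] (k : ℕ) (H : Set R) : Set R :=
  {r : R | ∀ x : Fin k → R, (∀ i, x i ∈ H) → lprod r (List.ofFn x) = 0}

theorem lprod_append {R : Type*} [Ring R] (r : R) (l₁ l₂ : List R) :
    lprod r (l₁ ++ l₂) = lprod (lprod r l₁) l₂ :=
  List.foldl_append

theorem lprod_zero {R : Type*} [Ring R] (l : List R) : lprod (0 : R) l = 0 := by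
  induction l with
  | nil => rfl
  | cons x l ih => simpa [lprod, List.foldl_cons] using ih

theorem lprod_concat {R : Type*} [Ring R] (r : R) (l : List R) (x : R) :
    lprod r (l ++ [x]) = lprod r l * x - x * lprod r l := by
  rw [lprod_append]; rfl

/-- Sets of commutators of `r` with `n` elements of `H`. -/
def lcS {R : Type*} [Ring R] (H : Set R) (r : R) (n : ℕ) : Set R :=
  {y | ∃ l : List R, l.length = n ∧ (∀ x ∈ l, x ∈ H) ∧ lprod r l = y}

/-- Span of all commutators of `r` with at least `m` elements of `H`. -/
def lcT (K : Type*) [Field K] {R : Type*} [Ring R] [Algebra K R]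
    (H : Set R) (r : R) (m : ℕ) : Submodule K R :=
  ⨆ j : ℕ, Submodule.span K (lcS H r (m + j))

theorem mem_Lcen_of_mem_Lcen {K : Type*} [Field K] {R : Type*} [Ring R] [Algebra K R]
    [FiniteDimensional K R] {d : ℕ} (hd : Module.finrank K R = d)
    (H : Set R) (r : R) (k : ℕ) (hr : r ∈ Lcen k H) : r ∈ Lcen d H := by
  classical
  set T := lcT K H r with hT
  -- basic membership
  have hmemT : ∀ (m : ℕ) (l : List R), m ≤ l.length → (∀ x ∈ l, x ∈ H) →
      lprod r l ∈ T m := by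
    intro m l hlen hl
    have : lprod r l ∈ Submodule.span K (lcS H r (m + (l.length - m))) := by
      apply Submodule.subset_span
      exact ⟨l, by omega, hl, rfl⟩
    exact le_iSup (fun j => Submodule.span K (lcS H r (m + j))) (l.length - m) this
  -- antitone
  have hanti : ∀ m m' : ℕ, m ≤ m' → T m' ≤ T m := by
    intro m m' hm
    apply iSup_le
    intro j
    have heq : m' + j = m + (m' - m + j) := by omega
    rw [heq]
    exact le_iSup (fun j => Submodule.span K (lcS H r (m + j))) (m' - m + j)
  -- the linear commutator map
  set φ : R → (R →ₗ[K] R) := fun x => LinearMap.mulRight K x - LinearMap.mulLeft K x with hφ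
  have hφ_apply : ∀ x w : R, φ x w = w * x - x * w := fun x w => rfl
  -- map φ x pushes T m into T (m+1)
  have hmap : ∀ x ∈ H, ∀ m : ℕ, Submodule.map (φ x) (T m) ≤ T (m + 1) := by
    intro x hx m
    rw [hT, lcT, Submodule.map_iSup]
    apply iSup_le
    intro j
    rw [Submodule.map_span]
    apply Submodule.span_le.2
    rintro _ ⟨y, ⟨l, hlen, hl, rfl⟩, rfl⟩
    have : φ x (lprod r l) ∈ lcS H r (m + 1 + j) := by
      refine ⟨l ++ [x], by simp [hlen]; omega, ?_, ?_⟩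
      · intro z hz
        rcases List.mem_append.1 hz with h' | h'
        · exact hl z h'
        · simpa using (by simpa using h' : z = x) ▸ hx
      · rw [lprod_concat, hφ_apply]
    exact Submodule.mem_iSup_of_mem j (Submodule.subset_span this)
  -- T (m+1) is contained in the sup of images of T m
  have hstep : ∀ m : ℕ, T (m + 1) ≤ ⨆ x ∈ H, Submodule.map (φ x) (T m) := by
    intro m
    apply iSup_le
    intro j
    apply Submodule.span_le.2
    rintro _ ⟨l, hlen, hl, rfl⟩
    have hne : l ≠ [] := by intro h; subst h; simp at hlen; omega
    have hdec : l.dropLast ++ [l.getLast hne] = l := List.dropLast_append_getLast hne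
    set x := l.getLast hne with hx
    have hxH : x ∈ H := hl x (List.getLast_mem hne)
    have h1 : lprod r l = φ x (lprod r l.dropLast) := by
      rw [hφ_apply, ← lprod_concat, hdec]
    have h2 : lprod r l.dropLast ∈ T m := by
      apply hmemT
      · have : l.dropLast.length = l.length - 1 := List.length_dropLast; omega
      · intro z hz; exact hl z (List.dropLast_subset l hz)
    have : lprod r l ∈ Submodule.map (φ x) (T m) := ⟨_, h2, h1.symm⟩
    exact le_iSup₂ (f := fun x (_ : x ∈ H) => Submodule.map (φ x) (T m)) x hxH this
  -- T k = ⊥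
  have hTk : T k = ⊥ := by
    rw [hT, lcT]
    apply eq_bot_iff.2
    apply iSup_le
    intro j
    apply Submodule.span_le.2
    rintro _ ⟨l, hlen, hl, rfl⟩
    have hkle : k ≤ l.length := by omega
    have htake : lprod r (l.take k) = 0 := by
      have hlt : (l.take k).length = k := by simp; omega
      have hofn : List.ofFn (fun i : Fin k => (l.take k).get (Fin.cast hlt.symm i)) = l.take k := by
        apply List.ext_get
        · simp [hlt]
        · intro i h1 h2
          simp
      have := hr (fun i : Fin k => (l.take k).get (Fin.cast hlt.symm i))
        (fun i => hl _ (List.take_subset k l (List.get_mem _ _)))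
      rwa [hofn] at this
    have : lprod r l = 0 := by
      conv_lhs => rw [← List.take_append_drop k l]
      rw [lprod_append, htake, lprod_zero]
    simp [this]
  -- stabilization implies bottom
  have hkey : ∀ m : ℕ, T m = T (m + 1) → T m = ⊥ := by
    intro m hm
    have hle : ∀ j : ℕ, T m ≤ T (m + j) := by
      intro j
      induction j with
      | zero => simp
      | succ j ih =>
        calc T m = T (m + 1) := hm
        _ ≤ ⨆ x ∈ H, Submodule.map (φ x) (T m) := hstep m
        _ ≤ ⨆ x ∈ H, Submodule.map (φ x) (T (m + j)) := by
            apply iSup₂_mono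
            intro x hx
            exact Submodule.map_mono ih
        _ ≤ T (m + j + 1) := by
            apply iSup₂_le
            intro x hx
            exact hmap x hx (m + j)
    have := (hle k).trans (hanti k (m + k) (by omega))
    rw [hTk] at this
    exact le_bot_iff.1 this
  -- dimension count
  have hdim : ∀ m : ℕ, T m = ⊥ ∨ Module.finrank K (T m) + m ≤ d := by
    intro m
    induction m with
    | zero =>
      right
      simpa [hd] using Submodule.finrank_le (T 0)
    | succ m ih =>
      rcases ih with hbot | hle
      · left
        exact le_bot_iff.1 (hbot ▸ hanti m (m + 1) (by omega))
      · rcases lt_or_eq_of_le (hanti m (m + 1) (by omega)) with hlt | heq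
        · right
          have := Submodule.finrank_lt_finrank_of_lt hlt
          omega
        · left
          have := hkey m heq.symm
          rw [heq, this]
  -- conclude T d = ⊥
  have hTd : T d = ⊥ := by
    rcases hdim d with hbot | hle
    · exact hbot
    · have : Module.finrank K (T d) = 0 := by omega
      exact Submodule.finrank_eq_zero.1 this
  -- finish
  intro x hx
  have hmem : lprod r (List.ofFn x) ∈ T d := by
    apply hmemT
    · simp
    · intro z hz
      rcases (List.mem_ofFn.1 hz : ∃ i, x i = z) with ⟨i, rfl⟩
      exact hx i
  rw [hTd] at hmem
  simpa using hmem

/-- In a finite-dimensional algebra of dimension `d`, an ω-Lie-nilpotent subset is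
Lie-nilpotent of index `d`. -/
theorem omega_lie_nilpotent_imp_index_d {K : Type*} [Field K] {R : Type*} [Ring R]
    [Algebra K R] [FiniteDimensional K R] {d : ℕ} (hd : Module.finrank K R = d)
    (H : Set R) (h : H ⊆ ⋃ k : ℕ, ⋃ (_ : 1 ≤ k), Lcen k H) :
    H ⊆ Lcen d H := by
  intro r hr
  obtain ⟨k, -, hk⟩ := by simpa using h hr
  exact mem_Lcen_of_mem_Lcen hd H r k hk
end

section
/- (Leibniz formula for iterated commutators) In any associative ring $R$, for all $r,s,x_1,\ldots,x_k\in R$: $[rs,x_1,\ldots,x_k]_{k+1}=\sum [r,x_{i_1},\ldots,x_{i_t}]_{t+1}\cdot[s,x_{j_1},\ldots,x_{j_{k-t}}]_{k-t+1}$, where the sum runs over all ways to split the index set $\{1,\ldots,k\}$ into two complementary increasing subsequences $i_1<\cdots<i_t$ and $j_1<\cdots<j_{k-t}$ (empty subsequences allowed, with $[r,\varnothing]_1=r$). -/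
lemma lprod_nil {R : Type*} [Ring R] (r : R) : lprod r [] = r := rfl

lemma lprod_cons {R : Type*} [Ring R] (r a : R) (l : List R) :
    lprod r (a :: l) = lprod (r * a - a * r) l := rfl

lemma lprod_add {R : Type*} [Ring R] (a b : R) (l : List R) :
    lprod (a + b) l = lprod a l + lprod b l := by
  induction l generalizing a b with
  | nil => rfl
  | cons x l ih =>
    rw [lprod_cons, lprod_cons, lprod_cons, ← ih]
    congr 1
    noncomm_ring

lemma lprod_congr {R : Type*} [Ring R] {a b : R} (h : a = b) (l : List R) :
    lprod a l = lprod b l := by rw [h]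

lemma sort_map_succ {k : ℕ} (t : Finset (Fin k)) :
    ((t.map (Fin.succEmb k)).sort (· ≤ ·)) = (t.sort (· ≤ ·)).map Fin.succ := by
  refine (fun h1 h2 h3 => List.Perm.eq_of_pairwise' (r := (· ≤ ·)) h2 h3 h1) ?_ ?_ ?_
  · rw [← Multiset.coe_eq_coe, Finset.sort_eq, Finset.map_val, ← Multiset.map_coe,
      Finset.sort_eq]
    rfl
  · exact Finset.pairwise_sort _ _
  · exact List.Pairwise.map _ (fun a b h => Fin.succ_le_succ_iff.mpr h)
      (Finset.pairwise_sort _ _)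

lemma sort_insert_zero {k : ℕ} (s : Finset (Fin (k + 1))) (h : 0 ∉ s) :
    ((insert 0 s).sort (· ≤ ·)) = 0 :: s.sort (· ≤ ·) :=
  Finset.sort_insert _ (fun b _ => Fin.zero_le b) h

lemma zero_not_mem_map_succ {k : ℕ} (t : Finset (Fin k)) :
    (0 : Fin (k + 1)) ∉ t.map (Fin.succEmb k) := by
  simp [Fin.succEmb, Fin.succ_ne_zero]

lemma compl_map_succ {k : ℕ} (t : Finset (Fin k)) :
    (t.map (Fin.succEmb k))ᶜ = insert 0 (tᶜ.map (Fin.succEmb k)) := by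
  ext i
  induction i using Fin.cases with
  | zero => simpa using zero_not_mem_map_succ t
  | succ j => simp [Fin.succEmb, Fin.succ_ne_zero]

lemma compl_insert_zero_map_succ {k : ℕ} (t : Finset (Fin k)) :
    (insert (0 : Fin (k + 1)) (t.map (Fin.succEmb k)))ᶜ = tᶜ.map (Fin.succEmb k) := by
  have h := compl_map_succ tᶜ
  rw [compl_compl] at h
  rw [← h, compl_compl]

lemma sum_powerset_map_succ {k : ℕ} {M : Type*} [AddCommMonoid M]
    (g : Finset (Fin (k + 1)) → M) :
    ∑ T ∈ ((Finset.univ : Finset (Fin k)).map (Fin.succEmb k)).powerset, g T =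
      ∑ t : Finset (Fin k), g (t.map (Fin.succEmb k)) := by
  refine Finset.sum_nbij'
    (i := fun T => T.preimage Fin.succ ((Fin.succ_injective k).injOn))
    (j := fun t => t.map (Fin.succEmb k)) (fun T _ => Finset.mem_univ _)
    (fun t _ => Finset.mem_powerset.2 ((Finset.map_subset_map).2 (Finset.subset_univ _)))
    ?_ (fun t _ => by simpa using Finset.preimage_map (Fin.succEmb k) t) ?_
  · intro T hT
    have hsub : T ⊆ Finset.univ.map (Fin.succEmb k) := Finset.mem_powerset.1 hT
    ext i
    induction i using Fin.cases with
    | zero =>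
      simp only [Finset.mem_map, Fin.succEmb, Function.Embedding.coeFn_mk,
        Finset.mem_preimage]
      constructor
      · rintro ⟨a, _, ha⟩; exact absurd ha (Fin.succ_ne_zero a)
      · intro h0
        exact absurd (hsub h0) (zero_not_mem_map_succ _)
    | succ j =>
      simp [Fin.succEmb, Fin.succ_injective k |>.eq_iff]
  · intro T hT
    have hsub : T ⊆ Finset.univ.map (Fin.succEmb k) := Finset.mem_powerset.1 hT
    congr 1
    ext i
    induction i using Fin.cases with
    | zero =>
      simp only [Finset.mem_map, Fin.succEmb, Function.Embedding.coeFn_mk,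
        Finset.mem_preimage]
      constructor
      · intro h0; exact absurd (hsub h0) (zero_not_mem_map_succ _)
      · rintro ⟨a, _, ha⟩; exact absurd ha (Fin.succ_ne_zero a)
    | succ j =>
      simp [Fin.succEmb, Fin.succ_injective k |>.eq_iff]

lemma sum_finset_fin_succ {k : ℕ} {M : Type*} [AddCommMonoid M]
    (f : Finset (Fin (k + 1)) → M) :
    ∑ T : Finset (Fin (k + 1)), f T
      = ∑ t : Finset (Fin k), f (t.map (Fin.succEmb k))
        + ∑ t : Finset (Fin k), f (insert 0 (t.map (Fin.succEmb k))) := by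
  have h1 : (Finset.univ : Finset (Finset (Fin (k + 1))))
      = (insert 0 (Finset.univ.map (Fin.succEmb k))).powerset := by
    rw [← Finset.powerset_univ]
    congr 1
    rw [Fin.univ_succ, Finset.cons_eq_insert]
    rfl
  rw [h1, Finset.sum_powerset_insert (zero_not_mem_map_succ _), sum_powerset_map_succ,
    sum_powerset_map_succ]

/-- Leibniz formula for iterated commutators: `[rs, x₁, …, x_k]` equals the sum over
all splittings of `{1, …, k}` into complementary increasing subsequences of the
products `[r, x over first part] * [s, x over second part]`. -/
theorem lprod_mul {R : Type*} [Ring R] (r s : R) {k : ℕ} (x : Fin k → R) :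
    lprod (r * s) (List.ofFn x) =
      ∑ T : Finset (Fin k),
        lprod r ((T.sort (· ≤ ·)).map x) * lprod s ((Tᶜ.sort (· ≤ ·)).map x) := by
  induction k generalizing r s with
  | zero =>
    simp [lprod, Finset.eq_empty_of_isEmpty, Finset.sort_empty]
  | succ k ih =>
    set x' : Fin k → R := x ∘ Fin.succ with hx'
    have hofn : List.ofFn x = x 0 :: List.ofFn x' := List.ofFn_succ
    -- left-hand side
    rw [hofn, lprod_cons,
      lprod_congr (show r * s * x 0 - x 0 * (r * s)
        = r * (s * x 0 - x 0 * s) + (r * x 0 - x 0 * r) * s by noncomm_ring),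
      lprod_add, ih r (s * x 0 - x 0 * s) x', ih (r * x 0 - x 0 * r) s x']
    -- right-hand side
    rw [sum_finset_fin_succ]
    congr 1
    · apply Finset.sum_congr rfl
      intro t _
      rw [compl_map_succ, sort_map_succ, sort_insert_zero _ (zero_not_mem_map_succ _),
        sort_map_succ, List.map_map, List.map_cons, List.map_map, lprod_cons]
    · apply Finset.sum_congr rfl
      intro t _
      rw [compl_insert_zero_map_succ, sort_insert_zero _ (zero_not_mem_map_succ _),
        sort_map_succ, sort_map_succ, List.map_cons, List.map_map, List.map_map, lprod_cons]
end
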